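/- Let C be a small category equipped with a Grothendieck pretopology J. Call a presheaf F : Cᵒᵖ ⥤ Type flabby if for every morphism f : U ⟶ V of C the restriction map F(f) : F(V) ⟶ F(U) is surjective, and call F a flabby sheaf if it is moreover a sheaf for the Grothendieck topology generated by J. Then every presheaf P : Cᵒᵖ ⥤ Type admits a morphism ρ : P ⟶ G with G a flabby sheaf such that every morphism from P to a flabby sheaf factors through ρ (the factorization is not required to be unique). -/

import Mathlib

universe u

open CategoryTheory CategoryTheory.Limits

/-- A presheaf is flabby if every restriction map is surjective. -/
def Flabby {C : Type u} [SmallCategory C] (F : Cᵒᵖ ⥤ Type u) : Prop :=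
  ∀ ⦃U V : C⦄ (f : U ⟶ V), Function.Surjective (F.map f.op)

namespace FlabbyReflection

variable {C : Type u} [SmallCategory C] [HasPullbacks C]

/-- Formal elements generated by a presheaf `P`: elements of `P`, formal restrictions,
formal lifts along restriction maps (to force flabbiness), and formal gluings along
covering sieves (to force the sheaf condition). -/
inductive El (J : Pretopology C) (P : Cᵒᵖ ⥤ Type u) : C → Type u
  | of {U : C} (x : P.obj (Opposite.op U)) : El J P U
  | res {U V : C} (g : U ⟶ V) (t : El J P V) : El J P U
  | lift {U V : C} (f : U ⟶ V) (t : El J P U) : El J P V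
  | glue {U : C} (S : Sieve U) (hS : S ∈ J.toGrothendieck U)
      (fam : ∀ ⦃V : C⦄ (f : V ⟶ U), S.arrows f → El J P V) : El J P U

variable {J : Pretopology C} {P : Cᵒᵖ ⥤ Type u}

/-- The relation forcing functoriality, surjectivity of restrictions, and the sheaf axioms. -/
inductive Rel : ∀ {U : C}, El J P U → El J P U → Prop
  | refl {U} (t : El J P U) : Rel t t
  | symm {U} {a b : El J P U} : Rel a b → Rel b a
  | trans {U} {a b c : El J P U} : Rel a b → Rel b c → Rel a c
  | res_congr {U V : C} (g : U ⟶ V) {a b : El J P V} :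
      Rel a b → Rel (.res g a) (.res g b)
  | res_id {U} (t : El J P U) : Rel (.res (𝟙 U) t) t
  | res_comp {U V W : C} (g : U ⟶ V) (h : V ⟶ W) (t : El J P W) :
      Rel (.res g (.res h t)) (.res (g ≫ h) t)
  | res_of {U V : C} (g : U ⟶ V) (x : P.obj (Opposite.op V)) :
      Rel (.res g (.of x)) (.of (P.map g.op x))
  | lift_res {U V : C} (f : U ⟶ V) (t : El J P U) : Rel (.res f (.lift f t)) t
  | glue_res {U} (S : Sieve U) (hS : S ∈ J.toGrothendieck U)
      (fam : ∀ ⦃V : C⦄ (f : V ⟶ U), S.arrows f → El J P V)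
      (compat : ∀ ⦃Y₁ Y₂ Z : C⦄ (g₁ : Z ⟶ Y₁) (g₂ : Z ⟶ Y₂) (f₁ : Y₁ ⟶ U) (f₂ : Y₂ ⟶ U)
        (h₁ : S.arrows f₁) (h₂ : S.arrows f₂), g₁ ≫ f₁ = g₂ ≫ f₂ →
          Rel (.res g₁ (fam f₁ h₁)) (.res g₂ (fam f₂ h₂)))
      {V : C} (f : V ⟶ U) (hf : S.arrows f) :
      Rel (.res f (.glue S hS fam)) (fam f hf)
  | sep {U} (S : Sieve U) (hS : S ∈ J.toGrothendieck U) {a b : El J P U}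
      (h : ∀ ⦃V : C⦄ (f : V ⟶ U), S.arrows f → Rel (.res f a) (.res f b)) : Rel a b

theorem rel_of_eqvGen {U : C} {a b : El J P U} (h : Relation.EqvGen Rel a b) : Rel a b := by
  induction h with
  | rel _ _ h => exact h
  | refl => exact .refl _
  | symm _ _ _ ih => exact ih.symm
  | trans _ _ _ _ _ ih₁ ih₂ => exact ih₁.trans ih₂

theorem rel_of_mk_eq {U : C} {a b : El J P U}
    (h : Quot.mk Rel a = Quot.mk Rel b) : Rel a b :=
  rel_of_eqvGen (Quot.eq.1 h)

variable (J P) in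
/-- The weakly reflecting flabby sheaf. -/
def G : Cᵒᵖ ⥤ Type u where
  obj X := Quot (Rel (J := J) (P := P) (U := X.unop))
  map {X Y} h := TypeCat.ofHom (Quot.lift (fun t => Quot.mk _ (.res h.unop t))
    (fun _ _ hab => Quot.sound (.res_congr h.unop hab)))
  map_id X := by
    refine ConcreteCategory.hom_ext _ _ fun t => ?_
    induction t using Quot.ind with
    | _ t => exact Quot.sound (.res_id t)
  map_comp {X Y Z} h k := by
    refine ConcreteCategory.hom_ext _ _ fun t => ?_
    induction t using Quot.ind with
    | _ t => exact (Quot.sound (.res_comp k.unop h.unop t)).symm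

variable (J P) in
/-- The unit map. -/
def ρ : P ⟶ G J P where
  app X := TypeCat.ofHom fun x => Quot.mk _ (.of x)
  naturality X Y h := by
    refine ConcreteCategory.hom_ext _ _ fun x => ?_
    exact (Quot.sound (.res_of h.unop x)).symm

theorem flabby_G : Flabby (G J P) := by
  intro U V f
  intro b
  induction b using Quot.ind with
  | _ t => exact ⟨Quot.mk _ (.lift f t), Quot.sound (.lift_res f t)⟩

theorem isSheaf_G : Presieve.IsSheaf (J.toGrothendieck) (G J P) := by
  intro U S hS x hx
  have hout : ∀ ⦃V : C⦄ (f : V ⟶ U) (hf : S.arrows f),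
      Quot.mk Rel (Quot.out (x f hf) : El J P V) = x f hf := fun V f hf => Quot.out_eq _
  have hcompat : ∀ ⦃Y₁ Y₂ Z : C⦄ (g₁ : Z ⟶ Y₁) (g₂ : Z ⟶ Y₂) (f₁ : Y₁ ⟶ U) (f₂ : Y₂ ⟶ U)
      (h₁ : S.arrows f₁) (h₂ : S.arrows f₂), g₁ ≫ f₁ = g₂ ≫ f₂ →
        Rel (.res g₁ (Quot.out (x f₁ h₁))) (.res g₂ (Quot.out (x f₂ h₂))) := by
    intro Y₁ Y₂ Z g₁ g₂ f₁ f₂ h₁ h₂ hcomm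
    apply rel_of_mk_eq
    have := hx g₁ g₂ h₁ h₂ hcomm
    have e₁ : Quot.mk Rel (El.res g₁ (Quot.out (x f₁ h₁))) = (G J P).map g₁.op (x f₁ h₁) := by
      conv_rhs => rw [← hout f₁ h₁]
      rfl
    have e₂ : Quot.mk Rel (El.res g₂ (Quot.out (x f₂ h₂))) = (G J P).map g₂.op (x f₂ h₂) := by
      conv_rhs => rw [← hout f₂ h₂]
      rfl
    rw [e₁, e₂]; exact this
  refine ⟨Quot.mk _ (El.glue S hS (fun V f hf => Quot.out (x f hf))), ?_, ?_⟩
  · intro V f hf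
    calc (G J P).map f.op (Quot.mk _ (El.glue S hS (fun V f hf => Quot.out (x f hf))))
        = (show (G J P).obj (Opposite.op V) from
          Quot.mk Rel (El.res f (El.glue S hS (fun V f hf => Quot.out (x f hf))))) := rfl
      _ = (show (G J P).obj (Opposite.op V) from Quot.mk Rel (Quot.out (x f hf))) :=
          Quot.sound (Rel.glue_res S hS _ hcompat f hf)
      _ = x f hf := hout f hf
  · intro t ht
    induction t using Quot.ind with
    | _ a =>
      apply Quot.sound
      apply Rel.sep S hS
      intro V f hf
      apply rel_of_mk_eq
      show (G J P).map f.op (Quot.mk _ a)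
          = (G J P).map f.op (Quot.mk _ (El.glue S hS (fun V f hf => Quot.out (x f hf))))
      rw [ht f hf, ← hout f hf]
      exact (Quot.sound (Rel.glue_res S hS _ hcompat f hf)).symm

section Map

variable (Q : Cᵒᵖ ⥤ Type u) (hfl : Flabby Q)
  (hsh : Presieve.IsSheaf (J.toGrothendieck) Q) (φ : P ⟶ Q)

open Classical in
/-- Mapping formal elements into a flabby sheaf. -/
noncomputable def toQ : ∀ {U : C}, El J P U → Q.obj (Opposite.op U)
  | _, .of x => φ.app _ x
  | _, .res g t => Q.map g.op (toQ t)
  | _, .lift f t => Function.surjInv (hfl f) (toQ t)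
  | U, .glue S hS fam =>
      if hc : Presieve.FamilyOfElements.Compatible
          (fun (V : C) (f : V ⟶ U) (hf : S.arrows f) => toQ (fam f hf)) then
        (hsh S hS _ hc).exists.choose
      else
        have hne : ∃ (V : C) (f : V ⟶ U), S.arrows f := by
          by_contra hemp
          push_neg at hemp
          exact hc (fun Y₁ Y₂ Z g₁ g₂ f₁ f₂ h₁ h₂ _ => absurd h₁ (hemp _ _))
        Function.surjInv (hfl hne.choose_spec.choose)
          (toQ (fam hne.choose_spec.choose hne.choose_spec.choose_spec))

theorem toQ_rel : ∀ {U : C} {a b : El J P U}, Rel a b →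
    toQ Q hfl hsh φ a = toQ Q hfl hsh φ b := by
  intro U a b h
  induction h with
  | refl t => rfl
  | symm _ ih => exact ih.symm
  | trans _ _ ih₁ ih₂ => exact ih₁.trans ih₂
  | res_congr g _ ih => simp only [toQ, ih]
  | res_id t => simp only [toQ, op_id, FunctorToTypes.map_id_apply]
  | res_comp g h t => simp only [toQ, op_comp, FunctorToTypes.map_comp_apply]
  | res_of g x => simp only [toQ, FunctorToTypes.naturality]
  | lift_res f t => simp only [toQ, Function.surjInv_eq]
  | glue_res S hS fam compat f hf ih =>
      have hc : Presieve.FamilyOfElements.Compatible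
          (fun (V : C) (f : V ⟶ _) (hf : S.arrows f) => toQ Q hfl hsh φ (fam f hf)) := by
        intro Y₁ Y₂ Z g₁ g₂ f₁ f₂ h₁ h₂ hcomm
        simpa only [toQ] using ih g₁ g₂ f₁ f₂ h₁ h₂ hcomm
      show Q.map f.op (toQ Q hfl hsh φ (El.glue S hS fam)) = _
      rw [show toQ Q hfl hsh φ (El.glue S hS fam)
          = (hsh S hS _ hc).exists.choose by simp only [toQ]; rw [dif_pos hc]]
      exact (hsh S hS _ hc).exists.choose_spec f hf
  | sep S hS hrel ih =>
      rename_i U' a' b' _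
      apply (hsh S hS).isSeparatedFor.ext
      intro V f hf
      simpa only [toQ] using ih f hf

/-- The induced map out of the reflection. -/
noncomputable def desc : G J P ⟶ Q where
  app X := TypeCat.ofHom (Quot.lift (toQ Q hfl hsh φ) (fun _ _ h => toQ_rel Q hfl hsh φ h))
  naturality X Y h := by
    refine ConcreteCategory.hom_ext _ _ fun t => ?_
    induction t using Quot.ind with
    | _ t => rfl

theorem fac : ρ J P ≫ desc Q hfl hsh φ = φ := by
  ext X x
  rfl

end Map

end FlabbyReflection

theorem flabby_sheaf_weak_reflection
    {C : Type u} [SmallCategory C] [HasPullbacks C]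
    (J : Pretopology C) (P : Cᵒᵖ ⥤ Type u) :
    ∃ (G : Cᵒᵖ ⥤ Type u) (ρ : P ⟶ G),
      Flabby G ∧ Presieve.IsSheaf J.toGrothendieck G ∧
        ∀ (Q : Cᵒᵖ ⥤ Type u), Flabby Q → Presieve.IsSheaf J.toGrothendieck Q →
          ∀ f : P ⟶ Q, ∃ g : G ⟶ Q, ρ ≫ g = f := by
  refine ⟨FlabbyReflection.G J P, FlabbyReflection.ρ J P, FlabbyReflection.flabby_G,
    FlabbyReflection.isSheaf_G, ?_⟩
  intro Q hfl hsh f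
  exact ⟨FlabbyReflection.desc Q hfl hsh f, FlabbyReflection.fac Q hfl hsh f⟩
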